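/- arXiv:2008.02737 — 4 statements merged into one kernel-verified Lean document; each statement's English description precedes it below -/
import Mathlib

section
/- Let p ≥ d and let S* ∈ St(d,p)^n be a second-order critical point of f such that the p×(dn) matrix S* has rank strictly less than p. Then S* is a global minimizer of f over St(d,p)^n, and Z* = S*ᵀ·S* is a global minimizer of the SDP. -/
open Matrix BigOperators

noncomputable section

/-- `SO(k)`: real special orthogonal `k × k` matrices. -/
def SOset (k : ℕ) : Set (Matrix (Fin k) (Fin k) ℝ) :=
  {Q | Qᵀ * Q = 1 ∧ Q.det = 1}

/-- The Stiefel manifold `St(d,p)`: real `p × d` matrices with orthonormal columns. -/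
def StiefelSet (d p : ℕ) : Set (Matrix (Fin p) (Fin d) ℝ) :=
  {Y | Yᵀ * Y = 1}

/-- Assemble an `n`-tuple of `p × d` blocks into a `p × (dn)` matrix. -/
def flatten {n d p : ℕ} (S : Fin n → Matrix (Fin p) (Fin d) ℝ) :
    Matrix (Fin p) (Fin n × Fin d) ℝ :=
  fun a ib => S ib.1 a ib.2

/-- The `i`-th block column of a `p × (dn)` matrix. -/
def blockCol {n d p : ℕ} (M : Matrix (Fin p) (Fin n × Fin d) ℝ) (i : Fin n) :
    Matrix (Fin p) (Fin d) ℝ :=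
  fun a b => M a (i, b)

/-- Membership of all block columns in `St(d,p)`, i.e. `S ∈ St(d,p)^n`. -/
def StProdFeas {n d p : ℕ} (M : Matrix (Fin p) (Fin n × Fin d) ℝ) : Prop :=
  ∀ i : Fin n, blockCol M i ∈ StiefelSet d p

/-- The connection Laplacian of the measurements `(E, κ, Rbar)`. -/
def connLap {n d : ℕ} (E : Finset (Fin n × Fin n)) (κ : Fin n × Fin n → ℝ)
    (Rbar : Fin n × Fin n → Matrix (Fin d) (Fin d) ℝ) :
    Matrix (Fin n × Fin d) (Fin n × Fin d) ℝ :=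
  fun x y =>
    if x.1 = y.1 then
      (∑ j : Fin n, ((if (x.1, j) ∈ E then κ (x.1, j) else 0) +
          (if (j, x.1) ∈ E then κ (j, x.1) else 0))) *
        (if x.2 = y.2 then (1 : ℝ) else 0)
    else if (x.1, y.1) ∈ E then -κ (x.1, y.1) * Rbar (x.1, y.1) x.2 y.2
    else if (y.1, x.1) ∈ E then -κ (y.1, x.1) * Rbar (y.1, x.1) y.2 x.2
    else 0

/-- SDP feasibility: positive semidefinite with identity diagonal `d × d` blocks. -/
def SDPFeasible {n d : ℕ} (Z : Matrix (Fin n × Fin d) (Fin n × Fin d) ℝ) : Prop :=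
  Z.PosSemidef ∧ ∀ (i : Fin n) (a b : Fin d), Z (i, a) (i, b) = if a = b then (1 : ℝ) else 0

/-- The objective `f(S) = trace (L Sᵀ S)`. -/
def fObj {n d p : ℕ} (L : Matrix (Fin n × Fin d) (Fin n × Fin d) ℝ)
    (S : Matrix (Fin p) (Fin n × Fin d) ℝ) : ℝ :=
  (L * (Sᵀ * S)).trace

/-- The `p × d` matrix `P = [I_d ; 0]`. -/
def Pmat (d p : ℕ) : Matrix (Fin p) (Fin d) ℝ :=
  fun a b => if (a : ℕ) = (b : ℕ) then 1 else 0

/-- The projection `Π : SO(p)^n → St(d,p)^n`, as a `p × (dn)` matrix. -/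
def bigProj {n d p : ℕ} (Q : Fin n → Matrix (Fin p) (Fin p) ℝ) :
    Matrix (Fin p) (Fin n × Fin d) ℝ :=
  flatten (fun i => Q i * Pmat d p)

/-- First-order criticality of `f` on `St(d,p)^n`: along every (componentwise) `C¹` curve
through `S` in `St(d,p)^n`, the derivative of `f ∘ γ` vanishes at `0`. -/
def IsCriticalSt {n d p : ℕ} (L : Matrix (Fin n × Fin d) (Fin n × Fin d) ℝ)
    (S : Matrix (Fin p) (Fin n × Fin d) ℝ) : Prop :=
  ∀ γ : ℝ → Matrix (Fin p) (Fin n × Fin d) ℝ,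
    (∀ a ib, ContDiff ℝ 1 fun t => γ t a ib) → (∀ t, StProdFeas (γ t)) → γ 0 = S →
    deriv (fun t => fObj L (γ t)) 0 = 0

/-- Second-order criticality of `f` on `St(d,p)^n`. -/
def IsSecondOrderCriticalSt {n d p : ℕ} (L : Matrix (Fin n × Fin d) (Fin n × Fin d) ℝ)
    (S : Matrix (Fin p) (Fin n × Fin d) ℝ) : Prop :=
  IsCriticalSt L S ∧
  ∀ γ : ℝ → Matrix (Fin p) (Fin n × Fin d) ℝ,
    (∀ a ib, ContDiff ℝ 2 fun t => γ t a ib) → (∀ t, StProdFeas (γ t)) → γ 0 = S →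
    0 ≤ iteratedDeriv 2 (fun t => fObj L (γ t)) 0

/-- First-order criticality of the Shonan objective `g = f ∘ Π` on `SO(p)^n`. -/
def IsCriticalSO {n d p : ℕ} (L : Matrix (Fin n × Fin d) (Fin n × Fin d) ℝ)
    (Q : Fin n → Matrix (Fin p) (Fin p) ℝ) : Prop :=
  ∀ γ : ℝ → (Fin n → Matrix (Fin p) (Fin p) ℝ),
    (∀ i a b, ContDiff ℝ 1 fun t => γ t i a b) → (∀ t i, γ t i ∈ SOset p) → γ 0 = Q →
    deriv (fun t => fObj L (bigProj (γ t))) 0 = 0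

/-- `SymBlockDiag`: zero out all entries outside the `n` diagonal `d × d` blocks. -/
def symBlockDiag {n d : ℕ} (M : Matrix (Fin n × Fin d) (Fin n × Fin d) ℝ) :
    Matrix (Fin n × Fin d) (Fin n × Fin d) ℝ :=
  fun x y => if x.1 = y.1 then M x y else 0

/-- The certificate matrix `C = L − (1/2)·SymBlockDiag(L SᵀS + SᵀS L)`. -/
def certMat {n d p : ℕ} (L : Matrix (Fin n × Fin d) (Fin n × Fin d) ℝ)
    (S : Matrix (Fin p) (Fin n × Fin d) ℝ) :
    Matrix (Fin n × Fin d) (Fin n × Fin d) ℝ :=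
  L - (1 / 2 : ℝ) • symBlockDiag (L * (Sᵀ * S) + (Sᵀ * S) * L)

/-- The spectral norm (ℓ² operator norm) of a square real matrix. -/
def specNorm {m : Type*} [Fintype m] [DecidableEq m] (A : Matrix m m ℝ) : ℝ :=
  ‖Matrix.toEuclideanCLM (𝕜 := ℝ) A‖

/-- Squared Frobenius norm. -/
def frobSq {m k : ℕ} (M : Matrix (Fin m) (Fin k) ℝ) : ℝ :=
  ∑ a, ∑ b, (M a b) ^ 2


section Aux
variable {n d p : ℕ}

/-- trace of symBlockDiag M * Z = trace M when Z has identity diagonal blocks. -/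
lemma trace_symBlockDiag_mul {n d : ℕ} (M Z : Matrix (Fin n × Fin d) (Fin n × Fin d) ℝ)
    (hZ : ∀ (i : Fin n) (a b : Fin d), Z (i, a) (i, b) = if a = b then (1:ℝ) else 0) :
    (symBlockDiag M * Z).trace = M.trace := by
  rw [Matrix.trace, Matrix.trace]
  apply Finset.sum_congr rfl
  intro x _
  rw [Matrix.diag_apply, Matrix.mul_apply]
  rw [Fintype.sum_prod_type]
  rw [Finset.sum_eq_single x.1]
  · rw [Finset.sum_eq_single x.2]
    · simp [symBlockDiag, hZ]
    · intro c _ hc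
      simp [symBlockDiag, hZ, hc, Prod.ext_iff]
    · simp
  · intro j _ hj
    apply Finset.sum_eq_zero
    intro c _
    simp [symBlockDiag, hj, Ne.symm hj]
  · simp

lemma trace_certMat_mul {n d p : ℕ} (L : Matrix (Fin n × Fin d) (Fin n × Fin d) ℝ)
    (S : Matrix (Fin p) (Fin n × Fin d) ℝ) (Z : Matrix (Fin n × Fin d) (Fin n × Fin d) ℝ)
    (hZ : ∀ (i : Fin n) (a b : Fin d), Z (i, a) (i, b) = if a = b then (1:ℝ) else 0) :
    (certMat L S * Z).trace = (L * Z).trace - (L * (Sᵀ * S)).trace := by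
  rw [certMat, Matrix.sub_mul, Matrix.trace_sub, Matrix.smul_mul, Matrix.trace_smul]
  rw [trace_symBlockDiag_mul _ _ hZ, Matrix.trace_add, Matrix.trace_mul_comm (Sᵀ * S) L,
    smul_eq_mul]
  ring

/-- SᵀS is SDP feasible when S is Stiefel-product-feasible. -/
lemma sdp_feas_of_st {n d p : ℕ} (S : Matrix (Fin p) (Fin n × Fin d) ℝ) (hS : StProdFeas S) :
    SDPFeasible (Sᵀ * S) := by
  constructor
  · have h : Sᴴ = Sᵀ := by ext a b; simp [Matrix.conjTranspose_apply]
    rw [← h]; exact Matrix.posSemidef_conjTranspose_mul_self S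
  · intro i a b
    have := hS i
    rw [StiefelSet, Set.mem_setOf_eq] at this
    have h2 := congrFun (congrFun this a) b
    simp only [Matrix.mul_apply, Matrix.transpose_apply, Matrix.one_apply] at h2 ⊢
    rw [← h2]
    rfl

/-- existence of a unit vector orthogonal to the columns of S. -/
lemma exists_unit_kernel {n d p : ℕ} (S : Matrix (Fin p) (Fin n × Fin d) ℝ)
    (hrank : S.rank < p) :
    ∃ v : Fin p → ℝ, (∑ a, v a ^ 2 = 1) ∧ ∀ x, ∑ a, S a x * v a = 0 := by
  have hrt : (Sᵀ).rank < p := by rwa [Matrix.rank_transpose]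
  have hker : LinearMap.ker (Sᵀ).mulVecLin ≠ ⊥ := by
    intro hk
    have := LinearMap.finrank_range_add_finrank_ker (Sᵀ).mulVecLin
    rw [hk, finrank_bot, add_zero] at this
    rw [Module.finrank_pi] at this
    rw [Matrix.rank] at hrt
    simp only [Fintype.card_fin] at this
    omega
  obtain ⟨w, hw, hw0⟩ := Submodule.exists_mem_ne_zero_of_ne_bot hker
  rw [LinearMap.mem_ker] at hw
  have hnorm : 0 < ∑ a, w a ^ 2 := by
    have : ∃ a, w a ≠ 0 := by
      by_contra h
      push_neg at h
      exact hw0 (funext h)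
    obtain ⟨a, ha⟩ := this
    apply Finset.sum_pos' (fun i _ => sq_nonneg _) ⟨a, Finset.mem_univ a, by positivity⟩
  set c := Real.sqrt (∑ a, w a ^ 2) with hc
  have hcpos : 0 < c := Real.sqrt_pos.mpr hnorm
  refine ⟨fun a => w a / c, ?_, ?_⟩
  · have : ∑ a, (w a / c) ^ 2 = (∑ a, w a ^ 2) / c ^ 2 := by
      rw [Finset.sum_div]; apply Finset.sum_congr rfl; intro a _; rw [div_pow]
    rw [this, hc, Real.sq_sqrt hnorm.le, div_self hnorm.ne']
  · intro x
    have hx : ∑ a, S a x * w a = 0 := by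
      have := congrFun hw x
      simp only [Matrix.mulVecLin_apply, Matrix.mulVec, dotProduct,
        Matrix.transpose_apply, Pi.zero_apply] at this
      exact this
    have : ∑ a, S a x * (w a / c) = (∑ a, S a x * w a) / c := by
      rw [Finset.sum_div]; apply Finset.sum_congr rfl; intro a _; rw [mul_div_assoc]
    rw [this, hx]; exact zero_div c

end Aux

noncomputable section

def rr {n d : ℕ} (z : Fin n × Fin d → ℝ) (i : Fin n) : ℝ := Real.sqrt (∑ b, z (i,b)^2)
def cc1 {n d : ℕ} (z : Fin n × Fin d → ℝ) (i : Fin n) (t : ℝ) : ℝ :=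
  (Real.cos (t * rr z i) - 1) / (rr z i)^2
def cc2 {n d : ℕ} (z : Fin n × Fin d → ℝ) (i : Fin n) (t : ℝ) : ℝ :=
  Real.sin (t * rr z i) / rr z i
def dc2 {n d : ℕ} (z : Fin n × Fin d → ℝ) (i : Fin n) (t : ℝ) : ℝ :=
  Real.cos (t * rr z i) * rr z i / rr z i
def ddc2 {n d : ℕ} (z : Fin n × Fin d → ℝ) (i : Fin n) (t : ℝ) : ℝ :=
  -Real.sin (t * rr z i) * rr z i * rr z i / rr z i

variable {n d p : ℕ} (z : Fin n × Fin d → ℝ) (i : Fin n)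

lemma rr_nonneg : 0 ≤ rr z i := Real.sqrt_nonneg _

lemma rr_sq : (rr z i)^2 = ∑ b, z (i,b)^2 :=
  Real.sq_sqrt (Finset.sum_nonneg fun b _ => sq_nonneg _)

lemma z_zero (h : rr z i = 0) (b : Fin d) : z (i,b) = 0 := by
  have h2 : ∑ b, z (i,b)^2 = 0 := by rw [← rr_sq z i, h]; ring
  have := (Finset.sum_eq_zero_iff_of_nonneg (fun b _ => sq_nonneg (z (i,b)))).mp h2 b
    (Finset.mem_univ b)
  exact pow_eq_zero_iff (by norm_num) |>.mp this

lemma cc1_zero : cc1 z i 0 = 0 := by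
  simp [cc1]

lemma cc2_zero : cc2 z i 0 = 0 := by
  simp [cc2]

lemma ddc2_zero : ddc2 z i 0 = 0 := by
  simp [ddc2]

lemma dc2_zero : dc2 z i 0 = rr z i / rr z i := by
  simp [dc2]

lemma hasDerivAt_cc2 (t : ℝ) : HasDerivAt (cc2 z i) (dc2 z i t) t := by
  rcases eq_or_ne (rr z i) 0 with h | h
  · have h1 : cc2 z i = fun _ => 0 := by
      funext s; simp [cc2, h]
    have h2 : dc2 z i t = 0 := by simp [dc2, h]
    rw [h1, h2]; exact hasDerivAt_const t 0
  · have h1 : HasDerivAt (fun s => Real.sin (s * rr z i)) (Real.cos (t * rr z i) * rr z i) t :=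
      (hasDerivAt_mul_const (x := t) (rr z i)).sin
    exact h1.div_const (rr z i)

lemma hasDerivAt_cc1 (t : ℝ) : HasDerivAt (cc1 z i) (-(cc2 z i t)) t := by
  rcases eq_or_ne (rr z i) 0 with h | h
  · have h1 : cc1 z i = fun _ => 0 := by
      funext s; simp [cc1, h]
    have h2 : -(cc2 z i t) = 0 := by simp [cc2, h]
    rw [h1, h2]; exact hasDerivAt_const t 0
  · have h1 : HasDerivAt (fun s => Real.cos (s * rr z i) - 1)
        (-Real.sin (t * rr z i) * rr z i) t :=
      (hasDerivAt_mul_const (x := t) (rr z i)).cos.sub_const 1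
    have h2 : HasDerivAt (fun x => (Real.cos (x * rr z i) - 1) / rr z i ^ 2)
        (-Real.sin (t * rr z i) * rr z i / rr z i ^ 2) t := h1.div_const ((rr z i)^2)
    show HasDerivAt (fun x => (Real.cos (x * rr z i) - 1) / rr z i ^ 2) _ t
    convert h2 using 1
    rw [cc2, pow_two]
    field_simp

lemma hasDerivAt_dc2 (t : ℝ) : HasDerivAt (dc2 z i) (ddc2 z i t) t := by
  rcases eq_or_ne (rr z i) 0 with h | h
  · have h1 : dc2 z i = fun _ => 0 := by
      funext s; simp [dc2, h]
    have h2 : ddc2 z i t = 0 := by simp [ddc2, h]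
    rw [h1, h2]; exact hasDerivAt_const t 0
  · have h1 : HasDerivAt (fun s => Real.cos (s * rr z i)) (-Real.sin (t * rr z i) * rr z i) t :=
      (hasDerivAt_mul_const (x := t) (rr z i)).cos
    exact (h1.mul_const (rr z i)).div_const (rr z i)

lemma contDiff_cc1 : ContDiff ℝ 2 (cc1 z i) := by
  apply ContDiff.div_const
  exact (Real.contDiff_cos.comp (contDiff_id.mul contDiff_const)).sub contDiff_const

lemma contDiff_cc2 : ContDiff ℝ 2 (cc2 z i) := by
  apply ContDiff.div_const
  exact Real.contDiff_sin.comp (contDiff_id.mul contDiff_const)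

lemma trig_id (t : ℝ) :
    2 * cc1 z i t + (cc1 z i t)^2 * (rr z i)^2 + (cc2 z i t)^2 = 0 := by
  rcases eq_or_ne (rr z i) 0 with h | h
  · simp [cc1, cc2, h]
  · rw [cc1, cc2]
    set c := Real.cos (t * rr z i)
    set s := Real.sin (t * rr z i)
    have hsc : s^2 + c^2 = 1 := Real.sin_sq_add_cos_sq (t * rr z i)
    have key : 2*(c-1) + (c-1)^2 + s^2 = 0 := by nlinarith [hsc]
    have h2 : (rr z i)^2 ≠ 0 := pow_ne_zero _ h
    have e1 : 2 * ((c - 1) / (rr z i)^2) + ((c - 1)/(rr z i)^2)^2 * (rr z i)^2 + (s / rr z i)^2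
        = (2*(c-1) + (c-1)^2 + s^2) / (rr z i)^2 := by
      field_simp
    rw [e1, key, zero_div]

end

noncomputable section CurveDef
variable {n d p : ℕ}

def Kone (S : Matrix (Fin p) (Fin n × Fin d) ℝ) (z : Fin n × Fin d → ℝ)
    (a : Fin p) (x : Fin n × Fin d) : ℝ :=
  (∑ c, S a (x.1, c) * z (x.1, c)) * z x

def Ktwo (v : Fin p → ℝ) (z : Fin n × Fin d → ℝ) (a : Fin p) (x : Fin n × Fin d) : ℝ :=
  v a * z x

def curve (S : Matrix (Fin p) (Fin n × Fin d) ℝ) (z : Fin n × Fin d → ℝ) (v : Fin p → ℝ)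
    (t : ℝ) : Matrix (Fin p) (Fin n × Fin d) ℝ :=
  fun a x => S a x + cc1 z x.1 t * Kone S z a x + cc2 z x.1 t * Ktwo v z a x

variable (S : Matrix (Fin p) (Fin n × Fin d) ℝ) (z : Fin n × Fin d → ℝ) (v : Fin p → ℝ)

lemma curve_zero : curve S z v 0 = S := by
  funext a x
  simp [curve, cc1_zero, cc2_zero]

lemma curve_contDiff (a : Fin p) (x : Fin n × Fin d) :
    ContDiff ℝ 2 (fun t => curve S z v t a x) := by
  exact (contDiff_const.add ((contDiff_cc1 z x.1).mul contDiff_const)).add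
    ((contDiff_cc2 z x.1).mul contDiff_const)

/-- first entrywise derivative of the curve -/
def curveD (S : Matrix (Fin p) (Fin n × Fin d) ℝ) (z : Fin n × Fin d → ℝ) (v : Fin p → ℝ)
    (t : ℝ) : Matrix (Fin p) (Fin n × Fin d) ℝ :=
  fun a x => -(cc2 z x.1 t) * Kone S z a x + dc2 z x.1 t * Ktwo v z a x

/-- second entrywise derivative of the curve -/
def curveDD (S : Matrix (Fin p) (Fin n × Fin d) ℝ) (z : Fin n × Fin d → ℝ) (v : Fin p → ℝ)
    (t : ℝ) : Matrix (Fin p) (Fin n × Fin d) ℝ :=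
  fun a x => -(dc2 z x.1 t) * Kone S z a x + ddc2 z x.1 t * Ktwo v z a x

lemma hasDerivAt_curve (t : ℝ) (a : Fin p) (x : Fin n × Fin d) :
    HasDerivAt (fun s => curve S z v s a x) (curveD S z v t a x) t := by
  have h := (((hasDerivAt_const t (S a x)).add
      ((hasDerivAt_cc1 z x.1 t).mul_const (Kone S z a x))).add
      ((hasDerivAt_cc2 z x.1 t).mul_const (Ktwo v z a x)))
  have hval : curveD S z v t a x = 0 + -(cc2 z x.1 t) * Kone S z a x
      + dc2 z x.1 t * Ktwo v z a x := by
    simp only [curveD]; ring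
  rw [hval]; exact h

lemma hasDerivAt_curveD (t : ℝ) (a : Fin p) (x : Fin n × Fin d) :
    HasDerivAt (fun s => curveD S z v s a x) (curveDD S z v t a x) t := by
  have h := ((((hasDerivAt_cc2 z x.1 t).neg).mul_const (Kone S z a x)).add
      ((hasDerivAt_dc2 z x.1 t).mul_const (Ktwo v z a x)))
  have hval : curveDD S z v t a x = -(dc2 z x.1 t) * Kone S z a x
      + ddc2 z x.1 t * Ktwo v z a x := by
    simp only [curveDD]
  rw [hval]; exact h

lemma z_eta (x : Fin n × Fin d) : z (x.1, x.2) = z x := by rw [Prod.mk.eta]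

lemma curveD_zero (a : Fin p) (x : Fin n × Fin d) :
    curveD S z v 0 a x = v a * z x := by
  simp only [curveD, Ktwo]
  rw [cc2_zero, dc2_zero]
  rcases eq_or_ne (rr z x.1) 0 with h | h
  · have hz : z x = 0 := by rw [← z_eta z x]; exact z_zero z x.1 h x.2
    simp [hz, Kone]
  · rw [div_self h]; ring

lemma curveDD_zero (a : Fin p) (x : Fin n × Fin d) :
    curveDD S z v 0 a x = -(Kone S z a x) := by
  simp only [curveDD]
  rw [ddc2_zero, dc2_zero]
  rcases eq_or_ne (rr z x.1) 0 with h | h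
  · have hz : z x = 0 := by rw [← z_eta z x]; exact z_zero z x.1 h x.2
    simp [hz, Kone]
  · rw [div_self h]; ring

end CurveDef

section Feas
variable {n d p : ℕ} (S : Matrix (Fin p) (Fin n × Fin d) ℝ) (z : Fin n × Fin d → ℝ)
  (v : Fin p → ℝ)

lemma stprod_entry (hS : StProdFeas S) (i : Fin n) (b b' : Fin d) :
    ∑ a, S a (i, b) * S a (i, b') = if b = b' then (1:ℝ) else 0 := by
  have := hS i
  rw [StiefelSet, Set.mem_setOf_eq] at this
  have h2 := congrFun (congrFun this b) b'
  simp only [Matrix.mul_apply, Matrix.transpose_apply, Matrix.one_apply, blockCol] at h2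
  exact h2

lemma curve_feas (hS : StProdFeas S) (hv1 : ∑ a, v a ^ 2 = 1)
    (hv2 : ∀ x, ∑ a, S a x * v a = 0) (t : ℝ) : StProdFeas (curve S z v t) := by
  intro i
  rw [StiefelSet, Set.mem_setOf_eq]
  funext b b'
  rw [Matrix.mul_apply]
  simp only [Matrix.transpose_apply, blockCol]
  set α := cc1 z i t with hα
  set β := cc2 z i t with hβ
  -- intermediate sums
  have L2 : ∀ c', ∑ a, S a (i, c') * (∑ c, S a (i, c) * z (i, c)) = z (i, c') := by
    intro c'
    have : ∀ a, S a (i, c') * (∑ c, S a (i, c) * z (i, c))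
        = ∑ c, (S a (i, c') * S a (i, c)) * z (i, c) := by
      intro a; rw [Finset.mul_sum]; apply Finset.sum_congr rfl; intros; ring
    rw [Finset.sum_congr rfl fun a _ => this a, Finset.sum_comm]
    have : ∀ c, ∑ a, S a (i, c') * S a (i, c) * z (i, c)
        = (if c' = c then (1:ℝ) else 0) * z (i, c) := by
      intro c; rw [← Finset.sum_mul, stprod_entry S hS]
    rw [Finset.sum_congr rfl fun c _ => this c]
    simp
  have L3 : ∑ a, (∑ c, S a (i, c) * z (i, c)) ^ 2 = (rr z i)^2 := by
    rw [rr_sq]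
    have : ∀ a, (∑ c, S a (i, c) * z (i, c)) ^ 2
        = ∑ c, (S a (i, c) * (∑ c', S a (i, c') * z (i, c'))) * z (i, c) := by
      intro a; rw [pow_two, Finset.sum_mul]
      apply Finset.sum_congr rfl; intros; ring
    rw [Finset.sum_congr rfl fun a _ => this a, Finset.sum_comm]
    apply Finset.sum_congr rfl
    intro c _
    rw [← Finset.sum_mul, L2, pow_two]
  have L4 : ∑ a, (∑ c, S a (i, c) * z (i, c)) * v a = 0 := by
    have : ∀ a, (∑ c, S a (i, c) * z (i, c)) * v a
        = ∑ c, (S a (i, c) * v a) * z (i, c) := by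
      intro a; rw [Finset.sum_mul]; apply Finset.sum_congr rfl; intros; ring
    rw [Finset.sum_congr rfl fun a _ => this a, Finset.sum_comm]
    apply Finset.sum_eq_zero
    intro c _
    rw [← Finset.sum_mul, hv2]
    ring
  -- expand the product
  have expand : ∀ a, curve S z v t a (i, b) * curve S z v t a (i, b')
      = S a (i, b) * S a (i, b')
      + (α * z (i, b')) * (S a (i, b) * (∑ c, S a (i, c) * z (i, c)))
      + (β * z (i, b')) * (S a (i, b) * v a)
      + (α * z (i, b)) * (S a (i, b') * (∑ c, S a (i, c) * z (i, c)))
      + (α * α * (z (i, b) * z (i, b'))) * ((∑ c, S a (i, c) * z (i, c)) ^ 2)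
      + (α * β * (z (i, b) * z (i, b'))) * ((∑ c, S a (i, c) * z (i, c)) * v a)
      + (β * z (i, b)) * (S a (i, b') * v a)
      + (β * α * (z (i, b) * z (i, b'))) * ((∑ c, S a (i, c) * z (i, c)) * v a)
      + (β * β * (z (i, b) * z (i, b'))) * (v a ^ 2) := by
    intro a
    simp only [curve, Kone, Ktwo]
    ring
  rw [Finset.sum_congr rfl fun a _ => expand a]
  simp only [Finset.sum_add_distrib, ← Finset.mul_sum]
  rw [stprod_entry S hS, L2, L2, L3, L4, hv1, hv2, hv2]
  have trig := trig_id z i t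
  rw [← hα, ← hβ] at trig
  rw [Matrix.one_apply]
  linear_combination (z (i, b') * z (i, b)) * trig

section SecondDeriv
variable {n d p : ℕ}

lemma fObj_sum (L : Matrix (Fin n × Fin d) (Fin n × Fin d) ℝ)
    (M : Matrix (Fin p) (Fin n × Fin d) ℝ) :
    fObj L M = ∑ x, ∑ y, ∑ a, L x y * (M a y * M a x) := by
  rw [fObj, Matrix.trace]
  apply Finset.sum_congr rfl
  intro x _
  rw [Matrix.diag_apply, Matrix.mul_apply]
  apply Finset.sum_congr rfl
  intro y _
  rw [Matrix.mul_apply, Finset.mul_sum]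
  apply Finset.sum_congr rfl
  intro a _
  rw [Matrix.transpose_apply]

lemma iteratedDeriv_two_fObj (L : Matrix (Fin n × Fin d) (Fin n × Fin d) ℝ)
    (γ De DDe : ℝ → Matrix (Fin p) (Fin n × Fin d) ℝ)
    (h1 : ∀ t a x, HasDerivAt (fun s => γ s a x) (De t a x) t)
    (h2 : ∀ t a x, HasDerivAt (fun s => De s a x) (DDe t a x) t) :
    iteratedDeriv 2 (fun t => fObj L (γ t)) 0 =
      ∑ x, ∑ y, ∑ a, L x y *
        (DDe 0 a y * γ 0 a x + 2 * (De 0 a y * De 0 a x) + γ 0 a y * DDe 0 a x) := by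
  set D1 : ℝ → ℝ := fun t => ∑ x, ∑ y, ∑ a,
    L x y * (De t a y * γ t a x + γ t a y * De t a x) with hD1
  have H1 : ∀ t, HasDerivAt (fun s => fObj L (γ s)) (D1 t) t := by
    intro t
    have hfe : (fun s => fObj L (γ s))
        = fun s => ∑ x, ∑ y, ∑ a, L x y * (γ s a y * γ s a x) :=
      funext fun s => fObj_sum L (γ s)
    rw [hfe, hD1]
    apply HasDerivAt.fun_sum
    intro x _
    apply HasDerivAt.fun_sum
    intro y _
    apply HasDerivAt.fun_sum
    intro a _
    exact ((h1 t a y).mul (h1 t a x)).const_mul (L x y)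
  have hderiv : deriv (fun s => fObj L (γ s)) = D1 := funext fun t => (H1 t).deriv
  have H2 : HasDerivAt D1 (∑ x, ∑ y, ∑ a, L x y *
      ((DDe 0 a y * γ 0 a x + De 0 a y * De 0 a x)
        + (De 0 a y * De 0 a x + γ 0 a y * DDe 0 a x))) 0 := by
    rw [hD1]
    apply HasDerivAt.fun_sum
    intro x _
    apply HasDerivAt.fun_sum
    intro y _
    apply HasDerivAt.fun_sum
    intro a _
    exact (((h2 0 a y).mul (h1 0 a x)).add ((h1 0 a y).mul (h2 0 a x))).const_mul (L x y)
  rw [show (2:ℕ) = 1 + 1 from rfl, iteratedDeriv_succ, iteratedDeriv_one, hderiv, H2.deriv]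
  apply Finset.sum_congr rfl; intro x _
  apply Finset.sum_congr rfl; intro y _
  apply Finset.sum_congr rfl; intro a _
  ring

end SecondDeriv

section QuadEq
variable {n d p : ℕ}

lemma sts_apply (S : Matrix (Fin p) (Fin n × Fin d) ℝ) (x w : Fin n × Fin d) :
    (Sᵀ * S) x w = ∑ a, S a x * S a w := by
  rw [Matrix.mul_apply]
  apply Finset.sum_congr rfl
  intro a _
  rw [Matrix.transpose_apply]

lemma sts_symm (S : Matrix (Fin p) (Fin n × Fin d) ℝ) (x w : Fin n × Fin d) :
    (Sᵀ * S) x w = (Sᵀ * S) w x := by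
  rw [sts_apply, sts_apply]
  apply Finset.sum_congr rfl
  intro a _
  ring

lemma quad_eq (L : Matrix (Fin n × Fin d) (Fin n × Fin d) ℝ)
    (S : Matrix (Fin p) (Fin n × Fin d) ℝ) (z : Fin n × Fin d → ℝ) (v : Fin p → ℝ)
    (hv1 : ∑ a, v a ^ 2 = 1) :
    (∑ x, ∑ y, ∑ a, L x y * (-(Kone S z a y) * S a x
      + 2 * ((v a * z y) * (v a * z x)) + S a y * -(Kone S z a x)))
    = 2 * ∑ x, ∑ y, z x * certMat L S x y * z y := by
  -- inner sums over a
  have inner_eval : ∀ x y : Fin n × Fin d,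
      ∑ a, L x y * (-(Kone S z a y) * S a x
        + 2 * ((v a * z y) * (v a * z x)) + S a y * -(Kone S z a x))
      = (-(L x y * z y) * ∑ c, z (y.1, c) * (Sᵀ * S) x (y.1, c))
        + (2 * (L x y * (z y * z x)))
        + (-(L x y * z x) * ∑ c, z (x.1, c) * (Sᵀ * S) y (x.1, c)) := by
    intro x y
    have split : ∀ a, L x y * (-(Kone S z a y) * S a x
        + 2 * ((v a * z y) * (v a * z x)) + S a y * -(Kone S z a x))
        = (∑ c, (-(L x y * z y) * z (y.1, c)) * (S a x * S a (y.1, c)))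
          + (2 * (L x y * (z y * z x))) * v a ^ 2
          + (∑ c, (-(L x y * z x) * z (x.1, c)) * (S a y * S a (x.1, c))) := by
      intro a
      simp only [Kone]
      rw [show (∑ c, (-(L x y * z y) * z (y.1, c)) * (S a x * S a (y.1, c)))
          = (-(L x y * z y) * S a x) * ∑ c, z (y.1, c) * S a (y.1, c) by
        rw [Finset.mul_sum]; apply Finset.sum_congr rfl; intros; ring]
      rw [show (∑ c, (-(L x y * z x) * z (x.1, c)) * (S a y * S a (x.1, c)))
          = (-(L x y * z x) * S a y) * ∑ c, z (x.1, c) * S a (x.1, c) by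
        rw [Finset.mul_sum]; apply Finset.sum_congr rfl; intros; ring]
      rw [show (∑ c, S a (y.1, c) * z (y.1, c)) = ∑ c, z (y.1, c) * S a (y.1, c) from
        Finset.sum_congr rfl fun c _ => mul_comm _ _]
      rw [show (∑ c, S a (x.1, c) * z (x.1, c)) = ∑ c, z (x.1, c) * S a (x.1, c) from
        Finset.sum_congr rfl fun c _ => mul_comm _ _]
      ring
    rw [Finset.sum_congr rfl fun a _ => split a]
    simp only [Finset.sum_add_distrib]
    congr 1
    · congr 1
      · rw [Finset.sum_comm]
        rw [Finset.mul_sum]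
        apply Finset.sum_congr rfl
        intro c _
        rw [sts_apply, Finset.mul_sum, Finset.mul_sum]
        apply Finset.sum_congr rfl
        intros; ring
      · rw [← Finset.mul_sum, hv1, mul_one]
    · rw [Finset.sum_comm, Finset.mul_sum]
      apply Finset.sum_congr rfl
      intro c _
      rw [sts_apply, Finset.mul_sum, Finset.mul_sum]
      apply Finset.sum_congr rfl
      intros; ring
  rw [Finset.sum_congr rfl fun x _ => Finset.sum_congr rfl fun y _ => inner_eval x y]
  -- now evaluate the RHS
  have cert_apply : ∀ x y : Fin n × Fin d, certMat L S x y
      = L x y - (1/2) * (if x.1 = y.1 then ((L * (Sᵀ * S)) x y + ((Sᵀ * S) * L) x y) else 0) := by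
    intro x y
    simp [certMat, symBlockDiag, Matrix.sub_apply, Matrix.smul_apply, Matrix.add_apply]
  have rhs_eq : 2 * ∑ x, ∑ y, z x * certMat L S x y * z y
      = (2 * ∑ x, ∑ y, L x y * (z y * z x))
        - ∑ x, ∑ c, z x * ((L * (Sᵀ * S)) x (x.1, c) + ((Sᵀ * S) * L) x (x.1, c)) * z (x.1, c) := by
    have step1 : ∀ x : Fin n × Fin d, ∑ y, z x * certMat L S x y * z y
        = (∑ y, L x y * (z y * z x))
          - (1/2) * ∑ c, z x * ((L * (Sᵀ * S)) x (x.1, c) + ((Sᵀ * S) * L) x (x.1, c)) * z (x.1, c) := by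
      intro x
      have e : ∀ y : Fin n × Fin d, z x * certMat L S x y * z y
          = L x y * (z y * z x)
            - (1/2) * (if x.1 = y.1 then z x * ((L * (Sᵀ * S)) x y + ((Sᵀ * S) * L) x y) * z y else 0) := by
        intro y
        rw [cert_apply]
        rcases eq_or_ne x.1 y.1 with h | h
        · simp only [h, if_true, if_pos]
          ring
        · simp only [if_neg h]
          ring
      rw [Finset.sum_congr rfl fun y _ => e y]
      rw [Finset.sum_sub_distrib, ← Finset.mul_sum]
      congr 2
      rw [Fintype.sum_prod_type]
      rw [Finset.sum_comm]
      -- ∑ c, ∑ j, ite (x.1 = j) ...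
      apply Finset.sum_congr rfl
      intro c _
      rw [Finset.sum_ite_eq (Finset.univ : Finset (Fin n)) x.1
        (fun j => z x * ((L * (Sᵀ * S)) x (j, c) + ((Sᵀ * S) * L) x (j, c)) * z (j, c))]
      simp
    rw [Finset.sum_congr rfl fun x _ => step1 x]
    rw [Finset.sum_sub_distrib, mul_sub]
    congr 1
    rw [Finset.mul_sum]
    apply Finset.sum_congr rfl
    intro x _
    ring
  rw [rhs_eq]
  simp only [Finset.sum_add_distrib]
  -- name the three pieces
  have hQC : (∑ x, ∑ y, -(L x y * z x) * ∑ c, z (x.1, c) * (Sᵀ * S) y (x.1, c))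
      = -∑ x, ∑ c, z x * (L * (Sᵀ * S)) x (x.1, c) * z (x.1, c) := by
    rw [← Finset.sum_neg_distrib]
    apply Finset.sum_congr rfl
    intro x _
    have e : ∀ y, -(L x y * z x) * ∑ c, z (x.1, c) * (Sᵀ * S) y (x.1, c)
        = ∑ c, (-(z x) * z (x.1, c)) * (L x y * (Sᵀ * S) y (x.1, c)) := by
      intro y
      rw [Finset.mul_sum]
      apply Finset.sum_congr rfl
      intros; ring
    rw [Finset.sum_congr rfl fun y _ => e y, Finset.sum_comm, ← Finset.sum_neg_distrib]
    apply Finset.sum_congr rfl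
    intro c _
    rw [← Finset.mul_sum, Matrix.mul_apply]
    ring
  have hQA : (∑ x, ∑ y, -(L x y * z y) * ∑ c, z (y.1, c) * (Sᵀ * S) x (y.1, c))
      = -∑ x, ∑ c, z x * ((Sᵀ * S) * L) x (x.1, c) * z (x.1, c) := by
    rw [Finset.sum_comm]
    have step : ∀ y : Fin n × Fin d,
        (∑ x, -(L x y * z y) * ∑ c, z (y.1, c) * (Sᵀ * S) x (y.1, c))
        = ∑ c, -(z y * z (y.1, c)) * ((Sᵀ * S) * L) (y.1, c) y := by
      intro y
      have e : ∀ x, -(L x y * z y) * ∑ c, z (y.1, c) * (Sᵀ * S) x (y.1, c)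
          = ∑ c, (-(z y) * z (y.1, c)) * ((Sᵀ * S) (y.1, c) x * L x y) := by
        intro x
        rw [Finset.mul_sum]
        apply Finset.sum_congr rfl
        intro c _
        rw [sts_symm S x (y.1, c)]
        ring
      rw [Finset.sum_congr rfl fun x _ => e x, Finset.sum_comm]
      apply Finset.sum_congr rfl
      intro c _
      rw [← Finset.mul_sum, Matrix.mul_apply]
      ring
    rw [Finset.sum_congr rfl fun y _ => step y]
    rw [← Finset.sum_neg_distrib]
    rw [Fintype.sum_prod_type, Fintype.sum_prod_type]
    apply Finset.sum_congr rfl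
    intro i _
    rw [Finset.sum_comm]
    apply Finset.sum_congr rfl
    intro b _
    rw [← Finset.sum_neg_distrib]
    apply Finset.sum_congr rfl
    intro c _
    ring
  rw [hQA, hQC]
  have hsplit : (∑ x, ∑ c, z x * ((L * (Sᵀ * S)) x (x.1, c) + ((Sᵀ * S) * L) x (x.1, c)) * z (x.1, c))
      = (∑ x, ∑ c, z x * (L * (Sᵀ * S)) x (x.1, c) * z (x.1, c))
        + ∑ x, ∑ c, z x * ((Sᵀ * S) * L) x (x.1, c) * z (x.1, c) := by
    rw [← Finset.sum_add_distrib]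
    apply Finset.sum_congr rfl
    intro x _
    rw [← Finset.sum_add_distrib]
    apply Finset.sum_congr rfl
    intro c _
    ring
  rw [hsplit]
  have hQB : (∑ x, ∑ y, 2 * (L x y * (z y * z x))) = 2 * ∑ x, ∑ y, L x y * (z y * z x) := by
    rw [Finset.mul_sum]
    apply Finset.sum_congr rfl
    intro x _
    rw [Finset.mul_sum]
  rw [hQB]
  ring

end QuadEq

section Main
variable {n d p : ℕ}

lemma quad_trace_nonneg {m : Type*} [Fintype m] [DecidableEq m] (C Z : Matrix m m ℝ)
    (hC : ∀ z : m → ℝ, 0 ≤ ∑ x, ∑ y, z x * C x y * z y) (hZ : Z.PosSemidef) :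
    0 ≤ (C * Z).trace := by
  obtain ⟨B, rfl⟩ : ∃ B : Matrix m m ℝ, Z = Bᴴ * B := by
    open scoped MatrixOrder in
    refine ⟨CFC.sqrt Z, ?_⟩
    have h0 : 0 ≤ Z := Matrix.nonneg_iff_posSemidef.mpr hZ
    have hs : IsSelfAdjoint (CFC.sqrt Z) := (CFC.sqrt_nonneg Z).isSelfAdjoint
    rw [show (CFC.sqrt Z)ᴴ = CFC.sqrt Z from hs, CFC.sqrt_mul_sqrt_self Z h0]
  have h : (C * (Bᴴ * B)).trace = (B * C * Bᴴ).trace := by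
    rw [← Matrix.mul_assoc, Matrix.trace_mul_cycle]
  rw [h, Matrix.trace]
  apply Finset.sum_nonneg
  intro j _
  calc (0:ℝ) ≤ ∑ x, ∑ y, B j x * C x y * B j y := hC (fun x => B j x)
    _ = ∑ y, (∑ x, B j x * C x y) * B j y := by
        rw [Finset.sum_comm]; apply Finset.sum_congr rfl; intro y _
        rw [Finset.sum_mul]
    _ = _ := rfl

end Main

/-- A rank-deficient second-order critical point of the rank-restricted problem
is a global minimizer, and `S*ᵀS*` solves the SDP. -/
theorem statement3 {n d p : ℕ} (hn : 1 ≤ n) (hd : 1 ≤ d) (hdp : d ≤ p)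
    (E : Finset (Fin n × Fin n)) (hE : ∀ e ∈ E, e.1 < e.2)
    (κ : Fin n × Fin n → ℝ) (hκ : ∀ e ∈ E, 0 ≤ κ e)
    (Rbar : Fin n × Fin n → Matrix (Fin d) (Fin d) ℝ)
    (hRbar : ∀ e ∈ E, Rbar e ∈ SOset d)
    (Sstar : Matrix (Fin p) (Fin n × Fin d) ℝ) (hfeas : StProdFeas Sstar)
    (hcrit : IsSecondOrderCriticalSt (connLap E κ Rbar) Sstar)
    (hrank : Sstar.rank < p) :
    (∀ S : Matrix (Fin p) (Fin n × Fin d) ℝ, StProdFeas S →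
      fObj (connLap E κ Rbar) Sstar ≤ fObj (connLap E κ Rbar) S) ∧
    SDPFeasible (Sstarᵀ * Sstar) ∧
    ∀ Z, SDPFeasible Z →
      (connLap E κ Rbar * (Sstarᵀ * Sstar)).trace ≤ (connLap E κ Rbar * Z).trace := by
  set L := connLap E κ Rbar with hL
  obtain ⟨v, hv1, hv2⟩ := exists_unit_kernel Sstar hrank
  have hC : ∀ z : Fin n × Fin d → ℝ,
      0 ≤ ∑ x, ∑ y, z x * certMat L Sstar x y * z y := by
    intro z
    have h0 := hcrit.2 (curve Sstar z v)
      (fun a x => curve_contDiff Sstar z v a x)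
      (fun t => curve_feas Sstar z v hfeas hv1 hv2 t)
      (curve_zero Sstar z v)
    have heq := iteratedDeriv_two_fObj L (curve Sstar z v) (curveD Sstar z v)
      (curveDD Sstar z v)
      (fun t a x => hasDerivAt_curve Sstar z v t a x)
      (fun t a x => hasDerivAt_curveD Sstar z v t a x)
    rw [heq] at h0
    have hval : (∑ x, ∑ y, ∑ a, L x y * (curveDD Sstar z v 0 a y * curve Sstar z v 0 a x
          + 2 * (curveD Sstar z v 0 a y * curveD Sstar z v 0 a x)
          + curve Sstar z v 0 a y * curveDD Sstar z v 0 a x))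
        = ∑ x, ∑ y, ∑ a, L x y * (-(Kone Sstar z a y) * Sstar a x
          + 2 * ((v a * z y) * (v a * z x)) + Sstar a y * -(Kone Sstar z a x)) := by
      simp only [curveDD_zero, curveD_zero, curve_zero]
    rw [hval, quad_eq L Sstar z v hv1] at h0
    linarith
  have main : ∀ Z, SDPFeasible Z → (L * (Sstarᵀ * Sstar)).trace ≤ (L * Z).trace := by
    intro Z hZ
    have h1 := trace_certMat_mul L Sstar Z hZ.2
    have h2 := quad_trace_nonneg (certMat L Sstar) Z hC hZ.1
    linarith
  exact ⟨fun S hS => main (Sᵀ * S) (sdp_feas_of_st S hS),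
    sdp_feas_of_st Sstar hfeas, main⟩
end Feas
end
end

section
/- Let p ≥ d and let S* ∈ St(d,p)^n be a first-order critical point of f. If the certificate matrix C computed at S* is positive semidefinite (equivalently, its minimum eigenvalue λ_min satisfies λ_min ≥ 0), then S* is a global minimizer of f over St(d,p)^n, and Z* = S*ᵀ·S* is a global minimizer of the SDP. -/
open Matrix BigOperators

noncomputable section

section Helpers

variable {m : Type*} [Fintype m] [DecidableEq m]

lemma psd_diag_nonneg {A : Matrix m m ℝ} (hA : A.PosSemidef) (i : m) : 0 ≤ A i i := by
  have h := (posSemidef_iff_dotProduct_mulVec.mp hA).2 (Pi.single i 1)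
  simpa [dotProduct, Matrix.mulVec, Pi.single_apply, Finset.mul_sum,
    Finset.sum_ite_eq, Finset.sum_ite_eq'] using h

lemma psd_trace_nonneg {A : Matrix m m ℝ} (hA : A.PosSemidef) : 0 ≤ A.trace := by
  rw [Matrix.trace]
  exact Finset.sum_nonneg fun i _ => psd_diag_nonneg hA i

lemma trace_mul_psd_nonneg {C Z : Matrix m m ℝ} (hC : C.PosSemidef) (hZ : Z.PosSemidef) :
    0 ≤ (C * Z).trace := by
  obtain ⟨B, hB⟩ : ∃ B : Matrix m m ℝ, Z = Bᴴ * B := by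
    open scoped MatrixOrder in
    (obtain ⟨X, hX, -, hXe⟩ := CFC.exists_sqrt_of_isSelfAdjoint_of_quasispectrumRestricts
        hZ.isHermitian (QuasispectrumRestricts.nnreal_of_nonneg hZ.nonneg)
     exact ⟨X, by rw [← star_eq_conjTranspose, hX.star_eq, hXe]⟩)
  have heq : (C * Z).trace = (B * C * Bᴴ).trace := by
    rw [hB, ← Matrix.mul_assoc, Matrix.trace_mul_cycle]
  rw [heq]
  exact psd_trace_nonneg (hC.mul_mul_conjTranspose_same B)

end Helpers

lemma trace_sbd_mul {n d : ℕ} (M Z : Matrix (Fin n × Fin d) (Fin n × Fin d) ℝ)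
    (hZ : ∀ (i : Fin n) (a b : Fin d), Z (i, a) (i, b) = if a = b then (1 : ℝ) else 0) :
    (symBlockDiag M * Z).trace = M.trace := by
  rw [Matrix.trace, Matrix.trace]
  refine Finset.sum_congr rfl fun x _ => ?_
  simp only [Matrix.diag_apply]
  rw [Matrix.mul_apply]
  rw [Fintype.sum_prod_type]
  have : ∀ j : Fin n, ∑ b : Fin d, symBlockDiag M x (j, b) * Z (j, b) x
      = if x.1 = j then M x x else 0 := by
    intro j
    by_cases h : x.1 = j
    · subst h
      simp only [symBlockDiag, if_pos rfl, if_pos rfl]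
      have : ∀ b : Fin d, Z (x.1, b) x = if b = x.2 then (1:ℝ) else 0 := by
        intro b
        have := hZ x.1 b x.2
        simpa using this
      rw [Finset.sum_congr rfl fun b _ => by rw [this b]]
      simp
    · simp only [symBlockDiag, if_neg h, zero_mul, Finset.sum_const_zero, if_neg h]
  rw [Finset.sum_congr rfl fun j _ => this j]
  simp

lemma transpose_eq_conjTranspose {k l : Type*} [Fintype k] [Fintype l]
    (A : Matrix k l ℝ) : Aᵀ = Aᴴ := by
  ext i j; simp [Matrix.conjTranspose_apply]

/-- If the certificate matrix at a first-order critical point `S*` is positive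
semidefinite, then `S*` is a global minimizer and `S*ᵀS*` solves the SDP. -/
theorem statement4 {n d p : ℕ} (hn : 1 ≤ n) (hd : 1 ≤ d) (hdp : d ≤ p)
    (E : Finset (Fin n × Fin n)) (hE : ∀ e ∈ E, e.1 < e.2)
    (κ : Fin n × Fin n → ℝ) (hκ : ∀ e ∈ E, 0 ≤ κ e)
    (Rbar : Fin n × Fin n → Matrix (Fin d) (Fin d) ℝ)
    (hRbar : ∀ e ∈ E, Rbar e ∈ SOset d)
    (Sstar : Matrix (Fin p) (Fin n × Fin d) ℝ) (hfeas : StProdFeas Sstar)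
    (hcrit : IsCriticalSt (connLap E κ Rbar) Sstar)
    (hcert : (certMat (connLap E κ Rbar) Sstar).PosSemidef) :
    (∀ S : Matrix (Fin p) (Fin n × Fin d) ℝ, StProdFeas S →
      fObj (connLap E κ Rbar) Sstar ≤ fObj (connLap E κ Rbar) S) ∧
    SDPFeasible (Sstarᵀ * Sstar) ∧
    ∀ Z, SDPFeasible Z →
      (connLap E κ Rbar * (Sstarᵀ * Sstar)).trace ≤ (connLap E κ Rbar * Z).trace := by
  classical
  set L := connLap E κ Rbar with hL
  set X := Sstarᵀ * Sstar with hXdef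
  -- diagonal blocks of X are the identity
  have hXdiag : ∀ (i : Fin n) (a b : Fin d), X (i, a) (i, b) = if a = b then (1 : ℝ) else 0 := by
    intro i a b
    have h := hfeas i
    have h1 : ((blockCol Sstar i)ᵀ * blockCol Sstar i) a b = (1 : Matrix (Fin d) (Fin d) ℝ) a b := by
      rw [h]
    simp only [Matrix.mul_apply, Matrix.transpose_apply, Matrix.one_apply] at h1
    simpa [hXdef, Matrix.mul_apply, Matrix.transpose_apply, blockCol] using h1
  have hXpsd : X.PosSemidef := by
    rw [hXdef, transpose_eq_conjTranspose]
    exact Matrix.posSemidef_conjTranspose_mul_self Sstar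
  have hXfeas : SDPFeasible X := ⟨hXpsd, hXdiag⟩
  -- key trace identity
  have key : ∀ Z : Matrix (Fin n × Fin d) (Fin n × Fin d) ℝ, SDPFeasible Z →
      (L * Z).trace = (certMat L Sstar * Z).trace + (L * X).trace := by
    intro Z hZ
    have h1 : certMat L Sstar * Z
        = L * Z - (1 / 2 : ℝ) • (symBlockDiag (L * X + X * L) * Z) := by
      rw [certMat, Matrix.sub_mul, Matrix.smul_mul, hXdef]
    have h2 : (symBlockDiag (L * X + X * L) * Z).trace = (L * X).trace + (X * L).trace := by
      rw [trace_sbd_mul _ _ hZ.2, Matrix.trace_add]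
    have h3 : (X * L).trace = (L * X).trace := Matrix.trace_mul_comm X L
    rw [h1, Matrix.trace_sub, Matrix.trace_smul, h2, h3, smul_eq_mul]
    ring
  have hlow : ∀ Z : Matrix (Fin n × Fin d) (Fin n × Fin d) ℝ, SDPFeasible Z →
      (L * X).trace ≤ (L * Z).trace := by
    intro Z hZ
    rw [key Z hZ]
    have := trace_mul_psd_nonneg hcert hZ.1
    linarith [this]
  refine ⟨?_, hXfeas, hlow⟩
  intro S hS
  have hSdiag : ∀ (i : Fin n) (a b : Fin d), (Sᵀ * S) (i, a) (i, b) = if a = b then (1 : ℝ) else 0 := by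
    intro i a b
    have h := hS i
    have h1 : ((blockCol S i)ᵀ * blockCol S i) a b = (1 : Matrix (Fin d) (Fin d) ℝ) a b := by
      rw [h]
    simp only [Matrix.mul_apply, Matrix.transpose_apply, Matrix.one_apply] at h1
    simpa [Matrix.mul_apply, Matrix.transpose_apply, blockCol] using h1
  have hSpsd : (Sᵀ * S).PosSemidef := by
    rw [transpose_eq_conjTranspose]
    exact Matrix.posSemidef_conjTranspose_mul_self S
  exact hlow (Sᵀ * S) ⟨hSpsd, hSdiag⟩
end
end

section
/- Let p > d. Then the rank-restricted problem and the Shonan Averaging problem attain the same optimal value: the infimum of g(Q) = trace(L̄·Π(Q)ᵀ·Π(Q)) over Q ∈ SO(p)^n equals the infimum of f(S) = trace(L̄·SᵀS) over S ∈ St(d,p)^n. -/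
open Matrix BigOperators

noncomputable section

lemma Pmat_eq {d p : ℕ} (hdp : d ≤ p) :
    Pmat d p = Matrix.of fun a b => if a = Fin.castLE hdp b then 1 else 0 := by
  funext a b
  simp only [Pmat, Matrix.of_apply, Fin.ext_iff, Fin.coe_castLE]

lemma mul_Pmat_apply {d p : ℕ} (hdp : d ≤ p) (Q : Matrix (Fin p) (Fin p) ℝ)
    (a : Fin p) (b : Fin d) : (Q * Pmat d p) a b = Q a (Fin.castLE hdp b) := by
  rw [Pmat_eq hdp]
  simp [Matrix.mul_apply]

lemma PtP {d p : ℕ} (hdp : d ≤ p) : (Pmat d p)ᵀ * Pmat d p = 1 := by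
  funext b b'
  rw [Pmat_eq hdp]
  simp [Matrix.mul_apply, Matrix.transpose_apply, Matrix.one_apply,
    Fin.castLE_inj, eq_comm]

lemma exists_SO_extension {d p : ℕ} (hdp : d < p) (S : Matrix (Fin p) (Fin d) ℝ)
    (hS : Sᵀ * S = 1) : ∃ Q : Matrix (Fin p) (Fin p) ℝ, Q ∈ SOset p ∧ Q * Pmat d p = S := by
  classical
  set v : Fin p → EuclideanSpace ℝ (Fin p) := fun j =>
    if h : (j : ℕ) < d then WithLp.toLp 2 (fun a => S a ⟨j, h⟩) else 0 with hv
  set s : Set (Fin p) := {j | (j : ℕ) < d} with hs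
  have hortho : Orthonormal ℝ (s.restrict v) := by
    rw [orthonormal_iff_ite]
    intro i j
    have hi : ((i : Fin p) : ℕ) < d := i.2
    have hj : ((j : Fin p) : ℕ) < d := j.2
    have : (inner ℝ (s.restrict v i) (s.restrict v j) : ℝ)
        = (Sᵀ * S) ⟨(i : Fin p), hi⟩ ⟨(j : Fin p), hj⟩ := by
      simp only [Set.restrict, hv, hi, hj, dif_pos]
      simp [PiLp.inner_apply, Matrix.mul_apply, Matrix.transpose_apply, Set.restrict_apply, hi, hj,
        mul_comm]
    rw [this, hS]
    simp [Matrix.one_apply, Fin.ext_iff, Subtype.ext_iff]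
  have hcard : Module.finrank ℝ (EuclideanSpace ℝ (Fin p)) = Fintype.card (Fin p) := by
    simp
  obtain ⟨b, hb⟩ := hortho.exists_orthonormalBasis_extension_of_card_eq hcard
  set Q0 : Matrix (Fin p) (Fin p) ℝ := Matrix.of fun a c => b c a with hQ0
  have hQ0orth : Q0ᵀ * Q0 = 1 := by
    funext c c'
    have := (orthonormal_iff_ite (𝕜 := ℝ)).1 b.orthonormal c c'
    simp only [PiLp.inner_apply, RCLike.inner_apply, conj_trivial] at this
    simpa [Matrix.mul_apply, Matrix.transpose_apply, Matrix.one_apply, hQ0,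
      mul_comm] using this
  have hQ0P : Q0 * Pmat d p = S := by
    funext a c
    rw [mul_Pmat_apply hdp.le]
    have hc : ((Fin.castLE hdp.le c : Fin p) : ℕ) < d := by simpa using c.2
    have := hb (Fin.castLE hdp.le c) (by simpa [hs] using hc)
    simp only [hQ0, Matrix.of_apply]
    rw [this]
    simp [hv, hc]
  have hdet : Q0.det = 1 ∨ Q0.det = -1 := by
    have h1 : Q0.det * Q0.det = 1 := by
      have := congrArg Matrix.det hQ0orth
      simpa [Matrix.det_mul, Matrix.det_transpose, mul_comm] using this
    rcases mul_self_eq_one_iff.1 h1 with h | h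
    · exact Or.inl h
    · exact Or.inr h
  rcases hdet with h | h
  · exact ⟨Q0, ⟨hQ0orth, h⟩, hQ0P⟩
  · set D : Matrix (Fin p) (Fin p) ℝ :=
      Matrix.diagonal (fun c => if (c : ℕ) = p - 1 then -1 else 1) with hD
    have hDD : Dᵀ * D = 1 := by
      funext c c'
      simp only [hD, Matrix.diagonal_transpose]
      rw [Matrix.diagonal_mul_diagonal]
      by_cases hcc : c = c' <;>
        simp [Matrix.diagonal_apply, Matrix.one_apply, hcc] <;>
      split <;> norm_num
    have hDdet : D.det = -1 := by
      rw [hD, Matrix.det_diagonal]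
      have hlast : ∀ c : Fin p, (if (c : ℕ) = p - 1 then (-1 : ℝ) else 1)
          = if c = ⟨p - 1, by omega⟩ then -1 else 1 := by
        intro c; simp [Fin.ext_iff]
      simp_rw [hlast]
      rw [Finset.prod_ite_eq' Finset.univ (⟨p - 1, by omega⟩ : Fin p)
        (fun _ => (-1 : ℝ))]
      simp
    refine ⟨Q0 * D, ⟨?_, ?_⟩, ?_⟩
    · rw [Matrix.transpose_mul, Matrix.mul_assoc, ← Matrix.mul_assoc Q0ᵀ, hQ0orth,
        Matrix.one_mul, hDD]
    · rw [Matrix.det_mul, h, hDdet]; norm_num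
    · rw [Matrix.mul_assoc, ← hQ0P]
      congr 1
      funext c b'
      have hb' : (b' : ℕ) < d := b'.2
      rw [hD]
      rw [Matrix.diagonal_mul]
      by_cases hc : (c : ℕ) = p - 1
      · have : Pmat d p c b' = 0 := by
          simp only [Pmat]
          have : (c : ℕ) ≠ (b' : ℕ) := by omega
          simp [this]
        simp [hc, this]
      · simp [hc]

/-- For `p > d` the Shonan problem on `SO(p)^n` and the rank-restricted
problem on `St(d,p)^n` attain the same optimal value. -/
theorem statement6 {n d p : ℕ} (hn : 1 ≤ n) (hd : 1 ≤ d) (hdp : d < p)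
    (E : Finset (Fin n × Fin n)) (hE : ∀ e ∈ E, e.1 < e.2)
    (κ : Fin n × Fin n → ℝ) (hκ : ∀ e ∈ E, 0 ≤ κ e)
    (Rbar : Fin n × Fin n → Matrix (Fin d) (Fin d) ℝ)
    (hRbar : ∀ e ∈ E, Rbar e ∈ SOset d) :
    sInf {x : ℝ | ∃ Q : Fin n → Matrix (Fin p) (Fin p) ℝ, (∀ i, Q i ∈ SOset p) ∧
        x = fObj (connLap E κ Rbar) (bigProj Q)} =
    sInf {x : ℝ | ∃ S : Matrix (Fin p) (Fin n × Fin d) ℝ, StProdFeas S ∧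
        x = fObj (connLap E κ Rbar) S} := by
  congr 1
  ext x
  constructor
  · rintro ⟨Q, hQ, rfl⟩
    refine ⟨bigProj Q, ?_, rfl⟩
    intro i
    have hcol : blockCol (bigProj Q) i = Q i * Pmat d p := rfl
    show (blockCol (bigProj Q) i)ᵀ * blockCol (bigProj Q) i = 1
    rw [hcol, Matrix.transpose_mul, Matrix.mul_assoc, ← Matrix.mul_assoc (Q i)ᵀ,
      (hQ i).1, Matrix.one_mul, PtP hdp.le]
  · rintro ⟨S, hS, rfl⟩
    choose Q hQSO hQP using fun i => exists_SO_extension hdp (blockCol S i) (hS i)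
    refine ⟨Q, hQSO, ?_⟩
    have : bigProj Q = S := by
      funext a ib
      exact congrFun (congrFun (hQP ib.1) a) ib.2
    rw [this]
end
end

section
/- Suppose the SDP has a minimizer Z* whose rank equals r, and let p ≥ r (note r ≥ d automatically, since every SDP-feasible matrix has rank at least d). Then every global minimizer S* of f(S) = trace(L̄·SᵀS) over St(d,p)^n satisfies f(S*) = f_SDP*, and Z = S*ᵀ·S* is a global minimizer of the SDP. -/
open Matrix BigOperators

noncomputable section

lemma aux_sdpfeas {n d p : ℕ} (S : Matrix (Fin p) (Fin n × Fin d) ℝ)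
    (hS : ∀ i : Fin n, ((Matrix.of fun a b => S a (i, b) : Matrix (Fin p) (Fin d) ℝ))ᵀ *
      (Matrix.of fun a b => S a (i, b)) = 1) :
    (Sᵀ * S).PosSemidef ∧
      ∀ (i : Fin n) (a b : Fin d), (Sᵀ * S) (i, a) (i, b) = if a = b then (1:ℝ) else 0 := by
  constructor
  · have := Matrix.posSemidef_conjTranspose_mul_self S
    rwa [Matrix.conjTranspose_eq_transpose_of_trivial] at this
  · intro i a b
    have h := congrFun (congrFun (hS i) a) b
    simp only [Matrix.mul_apply, Matrix.transpose_apply, Matrix.of_apply] at h ⊢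
    rw [h, Matrix.one_apply]

/-- A PSD matrix of rank ≤ p factors as `S₀ᵀS₀` with `S₀` having `p` rows. -/
lemma aux_factor {m : Type*} [Fintype m] [DecidableEq m] {p : ℕ} (Z : Matrix m m ℝ) (hZ : Z.PosSemidef)
    (hp : Z.rank ≤ p) :
    ∃ S : Matrix (Fin p) m ℝ, Sᵀ * S = Z := by
  classical
  set ev := hZ.1.eigenvalues with hev
  set U : Matrix m m ℝ := (hZ.1.eigenvectorUnitary : Matrix m m ℝ)
    with hU
  set B : Matrix m m ℝ :=
    Matrix.diagonal (fun i => Real.sqrt (ev i)) * star U with hB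
  have hBB : Bᵀ * B = Z := by
    rw [hB, transpose_mul, diagonal_transpose, ← Matrix.conjTranspose_eq_transpose_of_trivial,
      star_eq_conjTranspose, conjTranspose_conjTranspose]
    rw [mul_assoc, ← mul_assoc (Matrix.diagonal _), diagonal_mul_diagonal]
    have h2 : (fun i => Real.sqrt (ev i) * Real.sqrt (ev i))
        = (RCLike.ofReal ∘ ev : m → ℝ) := by
      funext i
      simp [Real.mul_self_sqrt (hZ.eigenvalues_nonneg i)]
      exact Real.mul_self_sqrt (hZ.eigenvalues_nonneg i)
    rw [h2, ← mul_assoc]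
    exact hZ.1.spectral_theorem.symm
  have hBzero : ∀ i, ev i = 0 → ∀ x, B i x = 0 := by
    intro i hi x
    simp [hB, Matrix.mul_apply, Matrix.diagonal, hi]
  have hcard : Fintype.card {i // ev i ≠ 0} ≤ Fintype.card (Fin p) := by
    rw [Fintype.card_fin, ← hZ.1.rank_eq_card_non_zero_eigs]
    exact hp
  obtain ⟨φ⟩ := Function.Embedding.nonempty_of_card_le hcard
  refine ⟨Matrix.of fun a x => ∑ i : {i // ev i ≠ 0}, if φ i = a then B i x else 0, ?_⟩
  ext x y
  rw [← hBB]
  simp only [Matrix.mul_apply, Matrix.transpose_apply, Matrix.of_apply]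
  have key : ∀ a : Fin p,
      (∑ i : {i // ev i ≠ 0}, if φ i = a then B i x else 0) *
      (∑ j : {j // ev j ≠ 0}, if φ j = a then B j y else 0)
      = ∑ i : {i // ev i ≠ 0}, ∑ j : {j // ev j ≠ 0},
          if φ i = a ∧ φ j = a then B i x * B j y else 0 := by
    intro a
    rw [Finset.sum_mul_sum]
    refine Finset.sum_congr rfl fun i _ => Finset.sum_congr rfl fun j _ => ?_
    by_cases h1 : φ i = a <;> by_cases h2 : φ j = a <;> simp [h1, h2]
  calc ∑ a : Fin p, (∑ i : {i // ev i ≠ 0}, if φ i = a then B i x else 0) *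
        (∑ j : {j // ev j ≠ 0}, if φ j = a then B j y else 0)
      = ∑ a : Fin p, ∑ i : {i // ev i ≠ 0}, ∑ j : {j // ev j ≠ 0},
          if φ i = a ∧ φ j = a then B i x * B j y else 0 :=
        Finset.sum_congr rfl fun a _ => key a
    _ = ∑ i : {i // ev i ≠ 0}, ∑ j : {j // ev j ≠ 0}, ∑ a : Fin p,
          if φ i = a ∧ φ j = a then B i x * B j y else 0 := by
        rw [Finset.sum_comm]
        exact Finset.sum_congr rfl fun i _ => Finset.sum_comm
    _ = ∑ i : {i // ev i ≠ 0}, ∑ j : {j // ev j ≠ 0},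
          if j = i then B i x * B j y else 0 := by
        refine Finset.sum_congr rfl fun i _ => Finset.sum_congr rfl fun j _ => ?_
        by_cases hji : j = i
        · subst hji
          simp only [and_self, if_pos rfl]
          simp [Finset.sum_ite_eq]
        · have hcond : ∀ a : Fin p, ¬(φ i = a ∧ φ j = a) := by
            rintro a ⟨h1, h2⟩
            exact hji (φ.injective (h2.trans h1.symm))
          simp [hcond, hji]
    _ = ∑ i : {i // ev i ≠ 0}, B i x * B i y := by
        refine Finset.sum_congr rfl fun i _ => ?_
        rw [Finset.sum_ite_eq' Finset.univ i (fun j => B i x * B j y)]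
        simp
    _ = ∑ i ∈ Finset.univ.filter (fun i => ev i ≠ 0), B i x * B i y :=
        (Finset.sum_subtype (p := fun i => ev i ≠ 0) _ (fun i => by simp)
          (fun i => B i x * B i y)).symm
    _ = ∑ i, B i x * B i y := by
        refine Finset.sum_filter_of_ne fun i _ h => ?_
        intro hc
        exact h (by rw [hBzero i hc x]; ring)


/-- If the SDP has a minimizer of rank `r` and `p ≥ r`, then every global
minimizer of the rank-restricted problem attains the SDP optimal value, and `SᵀS` solves the
SDP. -/
theorem statement14 {n d p r : ℕ} (hn : 1 ≤ n) (hd : 1 ≤ d)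
    (E : Finset (Fin n × Fin n)) (hE : ∀ e ∈ E, e.1 < e.2)
    (κ : Fin n × Fin n → ℝ) (hκ : ∀ e ∈ E, 0 ≤ κ e)
    (Rbar : Fin n × Fin n → Matrix (Fin d) (Fin d) ℝ)
    (hRbar : ∀ e ∈ E, Rbar e ∈ SOset d)
    (Zstar : Matrix (Fin n × Fin d) (Fin n × Fin d) ℝ)
    (hfeas : SDPFeasible Zstar)
    (hopt : ∀ Z, SDPFeasible Z →
      (connLap E κ Rbar * Zstar).trace ≤ (connLap E κ Rbar * Z).trace)
    (hrank : Zstar.rank = r) (hpr : r ≤ p) :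
    ∀ S : Matrix (Fin p) (Fin n × Fin d) ℝ, StProdFeas S →
      (∀ Sp : Matrix (Fin p) (Fin n × Fin d) ℝ, StProdFeas Sp →
        fObj (connLap E κ Rbar) S ≤ fObj (connLap E κ Rbar) Sp) →
      fObj (connLap E κ Rbar) S =
        sInf {x : ℝ | ∃ Z, SDPFeasible Z ∧ x = (connLap E κ Rbar * Z).trace} ∧
      SDPFeasible (Sᵀ * S) ∧
      ∀ Z, SDPFeasible Z →
        (connLap E κ Rbar * (Sᵀ * S)).trace ≤ (connLap E κ Rbar * Z).trace := by
  classical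
  intro S hS hmin
  set L := connLap E κ Rbar with hL
  have hfS : SDPFeasible (Sᵀ * S) := by
    have := aux_sdpfeas S (fun i => hS i)
    exact ⟨this.1, this.2⟩
  obtain ⟨S0, hS0⟩ := aux_factor (p := p) Zstar hfeas.1 (by rw [hrank]; exact hpr)
  have hS0feas : StProdFeas S0 := by
    intro i
    show (blockCol S0 i)ᵀ * blockCol S0 i = 1
    ext a b
    have h := hfeas.2 i a b
    rw [← hS0] at h
    simp only [Matrix.mul_apply, Matrix.transpose_apply, blockCol] at h ⊢
    rw [h, Matrix.one_apply]
  have h1 : (L * Zstar).trace ≤ fObj L S := hopt _ hfS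
  have h2 : fObj L S ≤ (L * Zstar).trace := by
    have h := hmin S0 hS0feas
    simp only [fObj, hS0] at h
    exact h
  have heq : fObj L S = (L * Zstar).trace := le_antisymm h2 h1
  have hlb : ∀ x ∈ {x : ℝ | ∃ Z, SDPFeasible Z ∧ x = (L * Z).trace}, (L * Zstar).trace ≤ x := by
    rintro x ⟨Z, hZ, rfl⟩
    exact hopt Z hZ
  have hmem : (L * Zstar).trace ∈ {x : ℝ | ∃ Z, SDPFeasible Z ∧ x = (L * Z).trace} :=
    ⟨Zstar, hfeas, rfl⟩
  refine ⟨?_, hfS, ?_⟩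
  · rw [heq]
    exact le_antisymm (le_csInf ⟨_, hmem⟩ hlb) (csInf_le ⟨_, hlb⟩ hmem)
  · intro Z hZ
    calc (L * (Sᵀ * S)).trace = fObj L S := rfl
      _ = (L * Zstar).trace := heq
      _ ≤ (L * Z).trace := hopt Z hZ
end
end
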